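/- For any even integer n ≥ 4, m ∈ {0,...,n/2−1}, and natural number λ, the number of proper λ-colorings of the cycle Γ_n fixed by the reflection s_m : v ↦ (2m−v) mod n equals λ(λ−1)^{n/2}. -/

import Mathlib

private def pathType (k l : ℕ) : Type :=
  {g : Fin (k + 1) → Fin l // ∀ i : Fin k, g i.castSucc ≠ g i.succ}

private instance (k l : ℕ) : Fintype (pathType k l) := by
  unfold pathType; infer_instance

private def pathEquiv (k l : ℕ) :
    pathType (k + 1) l ≃ Σ g : pathType k l, {x : Fin l // x ≠ g.1 (Fin.last k)} where
  toFun g :=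
    ⟨⟨Fin.init g.1, fun i => by
        have h := g.2 i.castSucc
        simpa only [Fin.init, Fin.succ_castSucc] using h⟩,
      g.1 (Fin.last (k + 1)), by
        have h := (g.2 (Fin.last k)).symm
        simpa [Fin.init, Fin.succ_last] using h⟩
  invFun p :=
    ⟨Fin.snoc p.1.1 p.2.1, fun i => by
      refine Fin.lastCases ?_ ?_ i
      · simpa [Fin.snoc_castSucc, Fin.snoc_last] using (p.2.2).symm
      · intro j
        have h := p.1.2 j
        simpa only [Fin.succ_castSucc, Fin.snoc_castSucc] using h⟩
  left_inv g := by
    apply Subtype.ext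
    simpa using Fin.snoc_init_self g.1
  right_inv p := by
    rcases p with ⟨⟨h, hh⟩, x, hx⟩
    refine Sigma.ext (Subtype.ext ?_) ?_
    · funext i
      simp
    · refine (Subtype.heq_iff_coe_eq ?_).mpr ?_
      · intro y
        simp [Fin.init_snoc]
      · simp [Fin.snoc_last]

private lemma path_count (l : ℕ) : ∀ k, Nat.card (pathType k l) = l * (l - 1) ^ k := by
  intro k
  induction k with
  | zero =>
    have e : pathType 0 l ≃ Fin l :=
      { toFun := fun g => g.1 0
        invFun := fun x => ⟨fun _ => x, fun i => i.elim0⟩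
        left_inv := fun g => by
          apply Subtype.ext; funext i
          have : i = 0 := Fin.ext (by omega)
          rw [this]
        right_inv := fun x => rfl }
    rw [Nat.card_congr e]
    simp
  | succ k ih =>
    rw [Nat.card_congr (pathEquiv k l)]
    rw [Nat.card_eq_fintype_card, Fintype.card_sigma]
    have hfib : ∀ g : pathType k l,
        Fintype.card {x : Fin l // x ≠ g.1 (Fin.last k)} = l - 1 := by
      intro g
      have := Fintype.card_subtype_compl (fun x : Fin l => x = g.1 (Fin.last k))
      simpa using this
    calc (∑ g : pathType k l, Fintype.card {x : Fin l // x ≠ g.1 (Fin.last k)})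
        = ∑ _g : pathType k l, (l - 1) := by
          exact Finset.sum_congr rfl fun g _ => hfib g
      _ = Fintype.card (pathType k l) * (l - 1) := by
          rw [Finset.sum_const, smul_eq_mul, Fintype.card]
      _ = l * (l - 1) ^ (k + 1) := by
          rw [← Nat.card_eq_fintype_card, ih, pow_succ]; ring

private lemma main_card (k m l : ℕ) (hk : 2 ≤ k) (hm : m < k) :
    Nat.card {f : ZMod (k + k) → Fin l //
        (∀ x : ZMod (k + k), f x ≠ f (x + 1)) ∧
          ∀ v : ZMod (k + k), f (2 * (m : ZMod (k + k)) - v) = f v} =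
      Nat.card (pathType k l) := by
  haveI : NeZero (k + k) := ⟨by omega⟩
  haveI : Fact (1 < k + k) := ⟨by omega⟩
  set N := k + k with hN
  have hval_lt : ∀ w : ZMod N, w.val < N := fun w => ZMod.val_lt w
  have hidx : ∀ w : ZMod N, min w.val (N - w.val) < k + 1 := by
    intro w
    have := hval_lt w
    omega
  apply Nat.card_congr
  refine
    { toFun := fun f =>
        ⟨fun i => f.1 ((m : ZMod N) + (i.val : ℕ)), ?_⟩
      invFun := fun g =>
        ⟨fun v => g.1 ⟨min ((v - (m : ZMod N)).val) (N - (v - (m : ZMod N)).val),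
            hidx _⟩, ?_, ?_⟩
      left_inv := ?_
      right_inv := ?_ }
  · -- toFun produces a path coloring
    intro i
    rename_i f
    have h := f.2.1 ((m : ZMod N) + (i.val : ℕ))
    simpa [Fin.val_succ, Nat.cast_add, Nat.cast_one, add_assoc] using h
  · -- properness of invFun
    rename_i g
    intro x
    have hrw : x + 1 - (m : ZMod N) = (x - (m : ZMod N)) + 1 := by ring
    beta_reduce
    rw [hrw]
    set w := x - (m : ZMod N) with hw
    set j := w.val with hj
    have hjN : j < N := hval_lt w
    have hval1 : (w + 1).val = (j + 1) % N := by
      rw [ZMod.val_add, ZMod.val_one]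
    set j1 := (w + 1).val with hj1
    have hj1' : (j1 = j + 1 ∧ j + 1 < N) ∨ (j1 = 0 ∧ j = N - 1) := by
      by_cases hc : j + 1 < N
      · left; exact ⟨by rw [hval1, Nat.mod_eq_of_lt hc], hc⟩
      · right
        have hjn : j + 1 = N := by omega
        constructor
        · rw [hval1, hjn, Nat.mod_self]
        · omega
    have key : ∀ a b (h1 : a < k + 1) (h2 : b < k + 1),
        ((a < k ∧ b = a + 1) ∨ (b < k ∧ a = b + 1)) →
        g.1 ⟨a, h1⟩ ≠ g.1 ⟨b, h2⟩ := by
      intro a b h1 h2 hab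
      rcases hab with ⟨ha, rfl⟩ | ⟨hb, rfl⟩
      · exact g.2 ⟨a, ha⟩
      · exact (g.2 ⟨b, hb⟩).symm
    apply key
    omega
  · -- reflection invariance of invFun
    rename_i g
    intro v
    have hrw : 2 * (m : ZMod N) - v - (m : ZMod N) = -(v - (m : ZMod N)) := by ring
    refine congrArg g.1 (Fin.ext ?_)
    show min ((2 * (m : ZMod N) - v - (m : ZMod N)).val)
        (N - (2 * (m : ZMod N) - v - (m : ZMod N)).val) =
      min ((v - (m : ZMod N)).val) (N - (v - (m : ZMod N)).val)
    rw [hrw, ZMod.neg_val]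
    by_cases h0 : v - (m : ZMod N) = 0
    · simp [h0]
    · rw [if_neg h0]
      have h1 : (v - (m : ZMod N)).val < N := hval_lt _
      have h2 : (v - (m : ZMod N)).val ≠ 0 := by
        intro h
        exact h0 (by rwa [← ZMod.val_eq_zero])
      omega
  · -- left inverse
    intro f
    apply Subtype.ext
    funext v
    show f.1 ((m : ZMod N) + ((min ((v - (m : ZMod N)).val)
        (N - (v - (m : ZMod N)).val) : ℕ) : ZMod N)) = f.1 v
    set w := v - (m : ZMod N) with hw
    set j := w.val with hj
    have hjN : j < N := hval_lt w
    have hcast : ((j : ℕ) : ZMod N) = w := by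
      rw [hj, ZMod.natCast_val, ZMod.cast_id]
    by_cases hc : j ≤ N - j
    · have hmin : min j (N - j) = j := by omega
      rw [hmin, hcast]
      congr 1
      rw [hw]; ring
    · have hmin : min j (N - j) = N - j := by omega
      rw [hmin]
      have hcast2 : ((N - j : ℕ) : ZMod N) = -w := by
        push_cast [Nat.cast_sub (le_of_lt hjN)]
        rw [hcast]
        simp
      rw [hcast2]
      have hfin : (m : ZMod N) + -w = 2 * (m : ZMod N) - v := by rw [hw]; ring
      rw [hfin]
      exact f.2.2 v
  · -- right inverse
    intro g
    apply Subtype.ext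
    funext i
    have hrw : (m : ZMod N) + (i.val : ℕ) - (m : ZMod N) = ((i.val : ℕ) : ZMod N) := by
      ring
    have hval : (((i.val : ℕ) : ZMod N)).val = i.val :=
      ZMod.val_natCast_of_lt (by have := i.isLt; omega)
    refine congrArg g.1 (Fin.ext ?_)
    show min (((m : ZMod N) + (i.val : ℕ) - (m : ZMod N)).val)
        (N - ((m : ZMod N) + (i.val : ℕ) - (m : ZMod N)).val) = i.val
    rw [hrw, hval]
    have := i.isLt
    omega

/-- For even `n ≥ 4` and `m < n/2`, the number of proper `l`-colorings of the
cycle `Γ_n` fixed by the reflection `s_m : v ↦ 2m - v` equals `l(l-1)^{n/2}`. -/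
theorem orbital_stmt18 (n m l : ℕ) (hn : 4 ≤ n) (heven : Even n) (hm : m < n / 2) :
    Nat.card {f : ZMod n → Fin l //
        (∀ x : ZMod n, f x ≠ f (x + 1)) ∧
          ∀ v : ZMod n, f (2 * (m : ZMod n) - v) = f v} =
      l * (l - 1) ^ (n / 2) := by
  obtain ⟨k, rfl⟩ := heven
  have hk2 : 2 ≤ k := by omega
  have hd : (k + k) / 2 = k := by omega
  rw [hd] at hm ⊢
  rw [main_card k m l hk2 hm, path_count]
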